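/- arXiv:2303.17192 — 13 statements merged into one kernel-verified Lean document; each statement's English description precedes it below -/
import Mathlib

section
/- One-iteration estimate for the extragradient template: let F : ℝ^p → ℝ^p, let η > 0, β ∈ (0,1], γ > 0, and let x^{k}, u^k ∈ ℝ^p. Define y^k := x^k - (η/β) u^k and x^{k+1} := x^k - η F y^k. Then for any x̂ ∈ ℝ^p: ‖x^{k+1} - x̂‖² ≤ ‖x^k - x̂‖² - β‖y^k - x^k‖² + (η²/γ)‖F y^k - u^k‖² - 2η⟨F y^k, y^k - x̂⟩ - (β - γ)‖x^{k+1} - y^k‖² - (1 - β)‖x^{k+1} - x^k‖². -/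
open scoped RealInnerProductSpace

/-- One-iteration estimate for the extragradient template. -/
theorem eg_one_iteration_estimate {p : ℕ}
    (F : EuclideanSpace ℝ (Fin p) → EuclideanSpace ℝ (Fin p))
    (η β γ : ℝ) (hη : 0 < η) (hβ0 : 0 < β) (hβ1 : β ≤ 1) (hγ : 0 < γ)
    (xk uk yk xk1 : EuclideanSpace ℝ (Fin p))
    (hy : yk = xk - (η / β) • uk) (hx : xk1 = xk - η • F yk)
    (xhat : EuclideanSpace ℝ (Fin p)) :
    ‖xk1 - xhat‖ ^ 2 ≤ ‖xk - xhat‖ ^ 2 - β * ‖yk - xk‖ ^ 2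
      + (η ^ 2 / γ) * ‖F yk - uk‖ ^ 2 - 2 * η * ⟪F yk, yk - xhat⟫
      - (β - γ) * ‖xk1 - yk‖ ^ 2 - (1 - β) * ‖xk1 - xk‖ ^ 2 := by
  set g := F yk with hg
  have key : (‖xk - xhat‖ ^ 2 - β * ‖yk - xk‖ ^ 2
      + (η ^ 2 / γ) * ‖g - uk‖ ^ 2 - 2 * η * ⟪g, yk - xhat⟫
      - (β - γ) * ‖xk1 - yk‖ ^ 2 - (1 - β) * ‖xk1 - xk‖ ^ 2)
      - ‖xk1 - xhat‖ ^ 2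
      = (η ^ 2 / (γ * β ^ 2)) * ‖(β - γ) • uk - (β * (1 - γ)) • g‖ ^ 2 := by
    subst hx hy
    simp only [← real_inner_self_eq_norm_sq, inner_sub_left, inner_sub_right,
      inner_smul_left, inner_smul_right, RCLike.ofReal_real_eq_id, id_eq,
      real_inner_comm uk xk, real_inner_comm g xk, real_inner_comm g uk,
      real_inner_comm xhat xk, real_inner_comm xhat uk, real_inner_comm xhat g, conj_trivial]
    field_simp
    ring
  have hnn : 0 ≤ (η ^ 2 / (γ * β ^ 2)) * ‖(β - γ) • uk - (β * (1 - γ)) • g‖ ^ 2 := by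
    positivity
  linarith
end

section
/- Co-hypomonotone residual monotonicity estimate: let F : ℝ^p → ℝ^p be ρ-co-hypomonotone (⟨Fx - Fy, x - y⟩ ≥ -ρ‖Fx - Fy‖² for all x, y, with ρ ≥ 0) and L-Lipschitz continuous. Given η > 0, β ∈ (0,1], u^k ∈ ℝ^p, set y^k := x^k - (η/β)u^k and x^{k+1} := x^k - η F y^k. Then for any c > 0 and ω ≥ 1: ‖F x^{k+1}‖² ≤ ‖F x^k‖² - ((cη - 2(1+c)ρ)/(cη))‖F y^k - F x^k‖² + ((ηω + 2(1+c)ρ) L² η / β²)‖β F y^k - u^k‖² - (ω - 1)‖F x^{k+1} - F y^k‖². -/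
set_option maxHeartbeats 1000000


open scoped RealInnerProductSpace

/-- Co-hypomonotone residual monotonicity estimate for the extragradient template. -/
theorem eg_cohypomonotone_residual_estimate {p : ℕ}
    (F : EuclideanSpace ℝ (Fin p) → EuclideanSpace ℝ (Fin p))
    (ρ L : ℝ) (hρ : 0 ≤ ρ)
    (hco : ∀ x y, -ρ * ‖F x - F y‖ ^ 2 ≤ ⟪F x - F y, x - y⟫)
    (hL : ∀ x y, ‖F x - F y‖ ≤ L * ‖x - y‖)
    (η β : ℝ) (hη : 0 < η) (hβ0 : 0 < β) (hβ1 : β ≤ 1)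
    (xk uk yk xk1 : EuclideanSpace ℝ (Fin p))
    (hy : yk = xk - (η / β) • uk) (hx : xk1 = xk - η • F yk)
    (c ω : ℝ) (hc : 0 < c) (hω : 1 ≤ ω) :
    ‖F xk1‖ ^ 2 ≤ ‖F xk‖ ^ 2
      - ((c * η - 2 * (1 + c) * ρ) / (c * η)) * ‖F yk - F xk‖ ^ 2
      + ((η * ω + 2 * (1 + c) * ρ) * L ^ 2 * η / β ^ 2) * ‖β • F yk - uk‖ ^ 2
      - (ω - 1) * ‖F xk1 - F yk‖ ^ 2 := by
  set a := F xk1 with ha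
  set b := F yk with hb
  set d := F xk with hd
  set S := ‖b - d‖ ^ 2 with hS
  set T := ‖a - b‖ ^ 2 with hT
  set A := ‖a - d‖ ^ 2 with hA
  set E := ‖β • b - uk‖ ^ 2 with hE
  set P := ⟪a - d, b⟫ with hP
  have hβne : β ≠ 0 := ne_of_gt hβ0
  have hηne : η ≠ 0 := ne_of_gt hη
  -- (i) norm identity
  have e1 : ‖b - d‖ ^ 2 = ‖b‖ ^ 2 - 2 * ⟪b, d⟫ + ‖d‖ ^ 2 := by
    rw [@norm_sub_sq_real]
  have e2 : ‖a - b‖ ^ 2 = ‖a‖ ^ 2 - 2 * ⟪a, b⟫ + ‖b‖ ^ 2 := by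
    rw [@norm_sub_sq_real]
  have e3 : P = ⟪a, b⟫ - ⟪d, b⟫ := by rw [hP, inner_sub_left]
  have e4 : ⟪d, b⟫ = ⟪b, d⟫ := real_inner_comm _ _
  have f1 : ‖a‖ ^ 2 = ‖d‖ ^ 2 + 2 * P - S + T := by
    rw [hS, hT, e1, e2, e3, e4]; ring
  -- (ii) co-hypomonotonicity
  have hxk1k : xk1 - xk = -(η • b) := by rw [hx]; abel
  have f2 : η * P ≤ ρ * A := by
    have h := hco xk1 xk
    rw [hxk1k, inner_neg_right, real_inner_smul_right] at h
    rw [← ha, ← hd, ← hP, ← hA] at h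
    linarith
  -- (iii) Young
  have hadd : a - d = (b - d) + (a - b) := by abel
  have e5 : A = S + 2 * ⟪b - d, a - b⟫ + T := by
    rw [hA, hadd, @norm_add_sq_real, hS, hT]
  have e6 : ⟪b - d, a - b⟫ ≤ ‖b - d‖ * ‖a - b‖ := real_inner_le_norm _ _
  have young : 2 * c * (‖b - d‖ * ‖a - b‖) ≤ S + c ^ 2 * T := by
    rw [hS, hT]; nlinarith [sq_nonneg (‖b - d‖ - c * ‖a - b‖)]
  have e6c : c * ⟪b - d, a - b⟫ ≤ c * (‖b - d‖ * ‖a - b‖) :=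
    mul_le_mul_of_nonneg_left e6 hc.le
  have e5c : c * A = c * S + c * (2 * ⟪b - d, a - b⟫) + c * T := by
    linear_combination c * e5
  have f3 : c * A ≤ (c + 1) * S + c * (1 + c) * T := by linarith [e5c, e6c, young]
  -- (iv) Lipschitz
  have hx1y : xk1 - yk = -((η / β) • (β • b - uk)) := by
    rw [hx, hy, smul_sub, smul_smul]
    field_simp
    abel
  have f4 : β ^ 2 * T ≤ L ^ 2 * η ^ 2 * E := by
    have h := hL xk1 yk
    rw [hx1y, norm_neg, norm_smul, Real.norm_eq_abs,
      abs_of_pos (div_pos hη hβ0)] at h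
    have h2 : ‖a - b‖ ^ 2 ≤ (L * (η / β * ‖β • b - uk‖)) ^ 2 :=
      pow_le_pow_left₀ (norm_nonneg _) h 2
    rw [hT, hE]
    have hβsq : (0:ℝ) < β ^ 2 := by positivity
    calc β ^ 2 * ‖a - b‖ ^ 2 ≤ β ^ 2 * (L * (η / β * ‖β • b - uk‖)) ^ 2 :=
          mul_le_mul_of_nonneg_left h2 hβsq.le
      _ = L ^ 2 * η ^ 2 * ‖β • b - uk‖ ^ 2 := by field_simp; try ring
  -- assemble
  have hpos : (0:ℝ) < c * η * β ^ 2 := by positivity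
  have f2' : 2 * (c * β ^ 2) * (η * P) ≤ 2 * (c * β ^ 2) * (ρ * A) :=
    mul_le_mul_of_nonneg_left f2 (by positivity)
  have f3' : 2 * ρ * β ^ 2 * (c * A) ≤ 2 * ρ * β ^ 2 * ((c + 1) * S + c * (1 + c) * T) :=
    mul_le_mul_of_nonneg_left f3 (by positivity)
  have hcoef : 0 ≤ c * (2 * (1 + c) * ρ + ω * η) := by positivity
  have f4' : c * (2 * (1 + c) * ρ + ω * η) * (β ^ 2 * T) ≤
      c * (2 * (1 + c) * ρ + ω * η) * (L ^ 2 * η ^ 2 * E) :=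
    mul_le_mul_of_nonneg_left f4 hcoef
  have f1' : c * η * β ^ 2 * ‖a‖ ^ 2 = c * η * β ^ 2 * ‖d‖ ^ 2
      + 2 * (c * β ^ 2) * (η * P) - c * η * β ^ 2 * S + c * η * β ^ 2 * T := by
    linear_combination (c * η * β ^ 2) * f1
  have H : c * η * β ^ 2 * ‖a‖ ^ 2 ≤
      c * η * β ^ 2 * ‖d‖ ^ 2 - β ^ 2 * (c * η - 2 * (1 + c) * ρ) * S
        + c * η * (η * ω + 2 * (1 + c) * ρ) * L ^ 2 * η * E
        - c * η * β ^ 2 * (ω - 1) * T := by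
    linarith [f1', f2', f3', f4']
  have hRHS : c * η * β ^ 2 * (‖d‖ ^ 2
      - ((c * η - 2 * (1 + c) * ρ) / (c * η)) * S
      + ((η * ω + 2 * (1 + c) * ρ) * L ^ 2 * η / β ^ 2) * E
      - (ω - 1) * T) =
      c * η * β ^ 2 * ‖d‖ ^ 2 - β ^ 2 * (c * η - 2 * (1 + c) * ρ) * S
        + c * η * (η * ω + 2 * (1 + c) * ρ) * L ^ 2 * η * E
        - c * η * β ^ 2 * (ω - 1) * T := by
    field_simp
  have H2 : c * η * β ^ 2 * ‖a‖ ^ 2 ≤ c * η * β ^ 2 * (‖d‖ ^ 2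
      - ((c * η - 2 * (1 + c) * ρ) / (c * η)) * S
      + ((η * ω + 2 * (1 + c) * ρ) * L ^ 2 * η / β ^ 2) * E
      - (ω - 1) * T) := by rw [hRHS]; exact H
  exact le_of_mul_le_mul_left H2 hpos
end

section
/- Last-iterate monotone decrease for EG under co-hypomonotonicity: let F : ℝ^p → ℝ^p be ρ-co-hypomonotone and L-Lipschitz. Consider y^k := x^k - η F x^k, x^{k+1} := x^k - η F y^k (i.e. β = 1). If ψ := 1 - 4ρ/η - L²η(η + 4ρ) > 0, then ‖F x^{k+1}‖² ≤ ‖F x^k‖² - ψ‖F y^k - F x^k‖². In particular the sequence (‖F x^k‖) is nonincreasing. -/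
open scoped RealInnerProductSpace

/-- Last-iterate monotone decrease for EG under co-hypomonotonicity. -/
theorem eg_last_iterate_decrease_cohypomonotone {p : ℕ}
    (F : EuclideanSpace ℝ (Fin p) → EuclideanSpace ℝ (Fin p))
    (ρ L η : ℝ) (hρ : 0 ≤ ρ) (hη : 0 < η)
    (hco : ∀ x y, -ρ * ‖F x - F y‖ ^ 2 ≤ ⟪F x - F y, x - y⟫)
    (hL : ∀ x y, ‖F x - F y‖ ≤ L * ‖x - y‖)
    (hψ : 0 < 1 - 4 * ρ / η - L ^ 2 * η * (η + 4 * ρ))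
    (x y : ℕ → EuclideanSpace ℝ (Fin p))
    (hy : ∀ k, y k = x k - η • F (x k))
    (hx : ∀ k, x (k + 1) = x k - η • F (y k)) :
    (∀ k : ℕ, ‖F (x (k + 1))‖ ^ 2 ≤ ‖F (x k)‖ ^ 2
        - (1 - 4 * ρ / η - L ^ 2 * η * (η + 4 * ρ)) * ‖F (y k) - F (x k)‖ ^ 2)
    ∧ (∀ k : ℕ, ‖F (x (k + 1))‖ ≤ ‖F (x k)‖) := by
  have main : ∀ k : ℕ, ‖F (x (k + 1))‖ ^ 2 ≤ ‖F (x k)‖ ^ 2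
      - (1 - 4 * ρ / η - L ^ 2 * η * (η + 4 * ρ)) * ‖F (y k) - F (x k)‖ ^ 2 := by
    intro k
    -- abbreviate (informally): a = F (x k), b = F (y k), c = F (x (k+1))
    have e1 : x (k + 1) - x k = -(η • F (y k)) := by rw [hx k]; abel
    have e2 : x (k + 1) - y k = η • (F (x k) - F (y k)) := by
      rw [hx k, hy k, smul_sub]; abel
    -- co-hypomonotonicity at (x (k+1), x k):  η⟪c-a,b⟫ ≤ ρ‖c-a‖²
    have h1 : -ρ * (‖F (x (k + 1))‖ ^ 2 - 2 * ⟪F (x k), F (x (k + 1))⟫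
          + ‖F (x k)‖ ^ 2)
        ≤ -(η * (⟪F (y k), F (x (k + 1))⟫ - ⟪F (x k), F (y k)⟫)) := by
      have h := hco (x (k + 1)) (x k)
      rw [e1, inner_neg_right, real_inner_smul_right, inner_sub_left,
        norm_sub_sq_real, real_inner_comm (F (x k)) (F (x (k + 1))),
        real_inner_comm (F (y k)) (F (x (k + 1)))] at h
      exact h
    -- Lipschitz at (x (k+1), y k), squared:  ‖c-b‖² ≤ L²η²‖a-b‖²
    have h3 : ‖F (x (k + 1))‖ ^ 2 - 2 * ⟪F (y k), F (x (k + 1))⟫ + ‖F (y k)‖ ^ 2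
        ≤ L ^ 2 * (η ^ 2 * (‖F (x k)‖ ^ 2 - 2 * ⟪F (x k), F (y k)⟫
          + ‖F (y k)‖ ^ 2)) := by
      have h := hL (x (k + 1)) (y k)
      rw [e2, norm_smul, Real.norm_eq_abs, abs_of_pos hη] at h
      have hsq := pow_le_pow_left₀ (norm_nonneg (F (x (k + 1)) - F (y k))) h 2
      rw [norm_sub_sq_real, mul_pow, mul_pow, norm_sub_sq_real,
        real_inner_comm (F (y k)) (F (x (k + 1)))] at hsq
      exact hsq
    -- Young's inequality from 0 ≤ ‖(c-b)-(b-a)‖²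
    have hY : 0 ≤ ‖F (x (k + 1))‖ ^ 2 - 2 * ⟪F (y k), F (x (k + 1))⟫
          + ‖F (y k)‖ ^ 2
        - 2 * (⟪F (y k), F (x (k + 1))⟫ - ⟪F (x k), F (x (k + 1))⟫
          - (‖F (y k)‖ ^ 2 - ⟪F (x k), F (y k)⟫))
        + (‖F (y k)‖ ^ 2 - 2 * ⟪F (x k), F (y k)⟫ + ‖F (x k)‖ ^ 2) := by
      have h := sq_nonneg ‖(F (x (k + 1)) - F (y k)) - (F (y k) - F (x k))‖
      rw [norm_sub_sq_real, norm_sub_sq_real, norm_sub_sq_real,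
        inner_sub_left, inner_sub_right, inner_sub_right,
        real_inner_self_eq_norm_sq,
        real_inner_comm (F (y k)) (F (x (k + 1))),
        real_inner_comm (F (x k)) (F (x (k + 1))),
        real_inner_comm (F (x k)) (F (y k))] at h
      exact h
    -- key inequality (multiplied through by η)
    have key : η * ‖F (x (k + 1))‖ ^ 2 ≤ η * ‖F (x k)‖ ^ 2
        - (η - 4 * ρ - L ^ 2 * η ^ 2 * (η + 4 * ρ))
          * (‖F (y k)‖ ^ 2 - 2 * ⟪F (x k), F (y k)⟫ + ‖F (x k)‖ ^ 2) := by
      have hYρ := mul_nonneg hρ hY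
      have h3' := mul_le_mul_of_nonneg_left h3 (by positivity : (0:ℝ) ≤ η + 4 * ρ)
      nlinarith [h1, hYρ, h3']
    rw [norm_sub_sq_real, real_inner_comm (F (x k)) (F (y k))]
    have expand : η * (‖F (x k)‖ ^ 2 - (1 - 4 * ρ / η - L ^ 2 * η * (η + 4 * ρ))
          * (‖F (y k)‖ ^ 2 - 2 * ⟪F (x k), F (y k)⟫ + ‖F (x k)‖ ^ 2))
        = η * ‖F (x k)‖ ^ 2 - (η - 4 * ρ - L ^ 2 * η ^ 2 * (η + 4 * ρ))
          * (‖F (y k)‖ ^ 2 - 2 * ⟪F (x k), F (y k)⟫ + ‖F (x k)‖ ^ 2) := by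
      field_simp
    have goal' : η * ‖F (x (k + 1))‖ ^ 2
        ≤ η * (‖F (x k)‖ ^ 2 - (1 - 4 * ρ / η - L ^ 2 * η * (η + 4 * ρ))
          * (‖F (y k)‖ ^ 2 - 2 * ⟪F (x k), F (y k)⟫ + ‖F (x k)‖ ^ 2)) := by
      rw [expand]; exact key
    exact le_of_mul_le_mul_left goal' hη
  refine ⟨main, fun k => ?_⟩
  have h := main k
  have hs : 0 ≤ ‖F (y k) - F (x k)‖ ^ 2 := sq_nonneg _
  have hsq : ‖F (x (k + 1))‖ ^ 2 ≤ ‖F (x k)‖ ^ 2 := by nlinarith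
  nlinarith [norm_nonneg (F (x (k + 1))), norm_nonneg (F (x k))]
end

section
/- Linear convergence of EG under star-strong monotonicity: let F : ℝ^p → ℝ^p be L-Lipschitz with F x⋆ = 0, and μ-star-strongly monotone at x⋆: ⟨Fx, x - x⋆⟩ ≥ μ‖x - x⋆‖² for all x, where 0 < μ ≤ L. For the EG iteration y^k := x^k - η F x^k, x^{k+1} := x^k - η F y^k with 0 < η < 1/L, one has ‖x^{k+1} - x⋆‖² ≤ (1 - η²(1 - L²η²)μ²)‖x^k - x⋆‖², and the contraction factor φ := 1 - η²(1 - L²η²)μ² lies in (0,1). -/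
set_option maxHeartbeats 1000000


open scoped RealInnerProductSpace

/-- Linear convergence of EG under star-strong monotonicity. -/
theorem eg_linear_convergence_star_strongly_monotone {p : ℕ}
    (F : EuclideanSpace ℝ (Fin p) → EuclideanSpace ℝ (Fin p))
    (L μ η : ℝ) (hL : ∀ x y, ‖F x - F y‖ ≤ L * ‖x - y‖)
    (xs : EuclideanSpace ℝ (Fin p)) (hxs : F xs = 0)
    (hμ0 : 0 < μ) (hμL : μ ≤ L)
    (hsm : ∀ x, μ * ‖x - xs‖ ^ 2 ≤ ⟪F x, x - xs⟫)
    (hη0 : 0 < η) (hη1 : η < 1 / L)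
    (x y : ℕ → EuclideanSpace ℝ (Fin p))
    (hy : ∀ k, y k = x k - η • F (x k))
    (hx : ∀ k, x (k + 1) = x k - η • F (y k)) :
    (∀ k : ℕ, ‖x (k + 1) - xs‖ ^ 2
        ≤ (1 - η ^ 2 * (1 - L ^ 2 * η ^ 2) * μ ^ 2) * ‖x k - xs‖ ^ 2)
    ∧ 0 < 1 - η ^ 2 * (1 - L ^ 2 * η ^ 2) * μ ^ 2
    ∧ 1 - η ^ 2 * (1 - L ^ 2 * η ^ 2) * μ ^ 2 < 1 := by
  have hL0 : 0 < L := lt_of_lt_of_le hμ0 hμL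
  have hLη : L * η < 1 := by
    rw [lt_div_iff₀ hL0] at hη1; linarith
  have hμη : μ * η < 1 := lt_of_le_of_lt (by nlinarith) hLη
  have h1Lη : 0 < 1 - L ^ 2 * η ^ 2 := by nlinarith [mul_pos hL0 hη0]
  have hpos : 0 < 1 - η ^ 2 * (1 - L ^ 2 * η ^ 2) * μ ^ 2 := by
    nlinarith [mul_pos hμ0 hη0, sq_nonneg (μ * η * (L * η))]
  have hlt : 1 - η ^ 2 * (1 - L ^ 2 * η ^ 2) * μ ^ 2 < 1 := by
    have := mul_pos (mul_pos (pow_pos hη0 2) h1Lη) (pow_pos hμ0 2)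
    linarith
  refine ⟨?_, hpos, hlt⟩
  intro k
  have hsx := hsm (x k)
  have hsy := hsm (y k)
  have hyk : y k - x k = -(η • F (x k)) := by rw [hy k]; abel
  have hak1 : x (k + 1) - xs = (x k - xs) - η • F (y k) := by rw [hx k]; abel
  have hdec : x k - xs = (y k - xs) + η • F (x k) := by rw [hy k]; abel
  have hlipk := hL (y k) (x k)
  obtain ⟨c, hcdef⟩ : ∃ v, v = F (y k) := ⟨_, rfl⟩
  obtain ⟨b, hbdef⟩ : ∃ v, v = F (x k) := ⟨_, rfl⟩
  obtain ⟨a, ha⟩ : ∃ v, v = x k - xs := ⟨_, rfl⟩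
  obtain ⟨d, hd⟩ : ∃ v, v = y k - xs := ⟨_, rfl⟩
  rw [← hbdef] at hsx hyk hdec
  rw [← ha] at hsx hak1 hdec
  rw [← hcdef] at hsy hak1
  rw [← hd] at hsy hdec
  rw [← hcdef, ← hbdef] at hlipk
  rw [hyk] at hlipk
  rw [norm_neg, norm_smul, Real.norm_eq_abs, abs_of_pos hη0] at hlipk
  have hb : μ * ‖a‖ ≤ ‖b‖ := by
    rcases eq_or_ne a (0 : EuclideanSpace ℝ (Fin p)) with h | h
    · simp [h]
    · have h2 := real_inner_le_norm b a
      have hna : 0 < ‖a‖ := norm_pos_iff.mpr h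
      nlinarith
  have E1 : ‖x (k + 1) - xs‖ ^ 2 = ‖a‖ ^ 2 - 2 * (η * ⟪c, a⟫) + η ^ 2 * ‖c‖ ^ 2 := by
    rw [hak1, norm_sub_sq_real, real_inner_smul_right, norm_smul, Real.norm_eq_abs,
      abs_of_pos hη0, mul_pow, real_inner_comm a c]
  have E2 : ⟪c, a⟫ = ⟪c, d⟫ + η * ⟪c, b⟫ := by
    rw [hdec, inner_add_right, real_inner_smul_right]
  have E3 : ‖c - b‖ ^ 2 = ‖c‖ ^ 2 - 2 * ⟪c, b⟫ + ‖b‖ ^ 2 := norm_sub_sq_real c b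
  clear hyk hdec hak1 hx hy hsm hxs hL hsx
  have hlip2 : ‖c - b‖ ^ 2 ≤ L ^ 2 * η ^ 2 * ‖b‖ ^ 2 := by
    nlinarith [norm_nonneg (c - b), norm_nonneg b, mul_pos hL0 hη0]
  have hb2 : μ ^ 2 * ‖a‖ ^ 2 ≤ ‖b‖ ^ 2 := by
    nlinarith [hb, mul_nonneg hμ0.le (norm_nonneg a)]
  have hinner : (0:ℝ) ≤ η * ⟪c, d⟫ :=
    mul_nonneg hη0.le (le_trans (mul_nonneg hμ0.le (sq_nonneg _)) hsy)
  have key2 : ‖x (k + 1) - xs‖ ^ 2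
      = ‖a‖ ^ 2 - 2 * (η * ⟪c, d⟫) + η ^ 2 * ‖c - b‖ ^ 2 - η ^ 2 * ‖b‖ ^ 2 := by
    rw [E1, E2]; linear_combination -η ^ 2 * E3
  have s1 : η ^ 2 * ‖c - b‖ ^ 2 ≤ η ^ 2 * (L ^ 2 * η ^ 2 * ‖b‖ ^ 2) :=
    mul_le_mul_of_nonneg_left hlip2 (sq_nonneg η)
  have s2 : η ^ 2 * (1 - L ^ 2 * η ^ 2) * (μ ^ 2 * ‖a‖ ^ 2)
      ≤ η ^ 2 * (1 - L ^ 2 * η ^ 2) * ‖b‖ ^ 2 :=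
    mul_le_mul_of_nonneg_left hb2 (mul_nonneg (sq_nonneg η) h1Lη.le)
  rw [key2, ha]
  rw [← ha]
  nlinarith [s1, s2, hinner]
end

section
/- Last-iterate decrease of residual for EG on monotone inclusions: let F : ℝ^p → ℝ^p be monotone and L-Lipschitz with Lη ≤ 1, let T be 3-cyclically monotone, and suppose points satisfy ξ^{k+1} ∈ T x^{k+1}, ξ^k ∈ T x^k, ζ^k ∈ T y^k, together with x^{k+1} - x^k = -η(F y^k + ξ^{k+1}) and x^k - y^k = η(F x^k + ζ^k). Define w^k := F x^k + ξ^k, w^{k+1} := F x^{k+1} + ξ^{k+1}, ŵ^{k+1} := F y^k + ξ^{k+1}, w̃^k := F x^k + ζ^k. Then ‖w^{k+1}‖² ≤ ‖w^k‖² - (1 - L²η²)‖ŵ^{k+1} - w̃^k‖² - ‖w^k - w̃^k‖². In particular ‖F x^{k+1} + ξ^{k+1}‖ ≤ ‖F x^k + ξ^k‖. -/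
open scoped RealInnerProductSpace

set_option maxHeartbeats 1000000 in
/-- Last-iterate decrease of the residual for EG on monotone inclusions. -/
theorem eg_inclusion_last_iterate_decrease {p : ℕ}
    (F : EuclideanSpace ℝ (Fin p) → EuclideanSpace ℝ (Fin p))
    (T : EuclideanSpace ℝ (Fin p) → Set (EuclideanSpace ℝ (Fin p)))
    (L η : ℝ) (hη : 0 < η)
    (hmono : ∀ x y, 0 ≤ ⟪F x - F y, x - y⟫)
    (hL : ∀ x y, ‖F x - F y‖ ≤ L * ‖x - y‖)
    (hLη : L * η ≤ 1)
    (h3 : ∀ x1 u1 x2 u2 x3 u3, u1 ∈ T x1 → u2 ∈ T x2 → u3 ∈ T x3 →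
      0 ≤ ⟪u1, x1 - x2⟫ + ⟪u2, x2 - x3⟫ + ⟪u3, x3 - x1⟫)
    (xk xk1 yk ξk ξk1 ζk : EuclideanSpace ℝ (Fin p))
    (hξk : ξk ∈ T xk) (hξk1 : ξk1 ∈ T xk1) (hζk : ζk ∈ T yk)
    (hx : xk1 - xk = -(η • (F yk + ξk1)))
    (hy : xk - yk = η • (F xk + ζk)) :
    ‖F xk1 + ξk1‖ ^ 2 ≤ ‖F xk + ξk‖ ^ 2
        - (1 - L ^ 2 * η ^ 2) * ‖(F yk + ξk1) - (F xk + ζk)‖ ^ 2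
        - ‖(F xk + ξk) - (F xk + ζk)‖ ^ 2
    ∧ ‖F xk1 + ξk1‖ ≤ ‖F xk + ξk‖ := by
  set a := F xk + ξk with ha
  set b := F xk1 + ξk1 with hb
  set c := F yk + ξk1 with hc
  set d := F xk + ζk with hd
  have hxk1 : xk - xk1 = η • c := by rw [← neg_sub, hx, neg_neg]
  have hxy : xk - yk = η • d := hy
  have hyx : yk - xk1 = η • (c - d) := by rw [smul_sub, ← hxk1, ← hxy]; abel
  have h1 : 0 ≤ ⟪F xk - F xk1, c⟫ := by
    have h := hmono xk xk1
    rw [hxk1, real_inner_smul_right] at h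
    nlinarith
  have h5 : 0 ≤ -⟪ξk1, c⟫ + ⟪ξk, d⟫ + ⟪ζk, c - d⟫ := by
    have h := h3 xk1 ξk1 xk ξk yk ζk hξk1 hξk hζk
    rw [hx, hxy, hyx, inner_neg_right, real_inner_smul_right, real_inner_smul_right,
      real_inner_smul_right] at h
    nlinarith
  have keyid : ⟪c, d⟫ + ⟪a, d⟫ - ⟪d, d⟫ - ⟪b, c⟫
      = ⟪F xk - F xk1, c⟫ + (-⟪ξk1, c⟫ + ⟪ξk, d⟫ + ⟪ζk, c - d⟫) := by
    simp only [ha, hb, hc, hd, inner_add_left, inner_add_right, inner_sub_left,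
      inner_sub_right]
    linear_combination real_inner_comm (F xk) (F yk) + real_inner_comm (F xk) ξk1
      + real_inner_comm ζk (F yk) + real_inner_comm ζk ξk1
  have key : 0 ≤ ⟪c, d⟫ + ⟪a, d⟫ - ⟪d, d⟫ - ⟪b, c⟫ := by rw [keyid]; linarith
  have hbceq : b - c = F xk1 - F yk := by rw [hb, hc]; abel
  have h2 : xk1 - yk = η • (d - c) := by rw [smul_sub, ← hxk1, ← hxy]; abel
  have hbc : ‖b - c‖ ≤ L * η * ‖c - d‖ := by
    calc ‖b - c‖ = ‖F xk1 - F yk‖ := by rw [hbceq]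
      _ ≤ L * ‖xk1 - yk‖ := hL xk1 yk
      _ = L * η * ‖c - d‖ := by
          rw [h2, norm_smul, Real.norm_eq_abs, abs_of_pos hη, norm_sub_rev]; ring
  have hbc0 : 0 ≤ L * η * ‖c - d‖ := le_trans (norm_nonneg _) hbc
  have hbcsq : ‖b - c‖ ^ 2 ≤ L ^ 2 * η ^ 2 * ‖c - d‖ ^ 2 := by
    nlinarith [norm_nonneg (b - c), hbc, hbc0]
  have hbcsq1 : ‖b - c‖ ^ 2 ≤ ‖c - d‖ ^ 2 := by
    have hcd : L * η * ‖c - d‖ ≤ ‖c - d‖ := by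
      nlinarith [norm_nonneg (c - d), hLη]
    nlinarith [norm_nonneg (b - c), hbc, hcd, norm_nonneg (c - d)]
  have e1 : ‖b - c‖ ^ 2 = ‖b‖ ^ 2 - 2 * ⟪b, c⟫ + ‖c‖ ^ 2 := norm_sub_sq_real b c
  have e2 : ‖c - d‖ ^ 2 = ‖c‖ ^ 2 - 2 * ⟪c, d⟫ + ‖d‖ ^ 2 := norm_sub_sq_real c d
  have e3 : ‖a - d‖ ^ 2 = ‖a‖ ^ 2 - 2 * ⟪a, d⟫ + ‖d‖ ^ 2 := norm_sub_sq_real a d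
  have e4 : ⟪d, d⟫ = ‖d‖ ^ 2 := real_inner_self_eq_norm_sq d
  constructor
  · nlinarith [key, hbcsq, e1, e2, e3, e4]
  · have hsq : ‖b‖ ^ 2 ≤ ‖a‖ ^ 2 := by nlinarith [key, hbcsq1, e1, e2, e3, e4]
    nlinarith [norm_nonneg a, norm_nonneg b, hsq]
end

section
/- FBFS one-iteration estimate: let η > 0, β ∈ (0,1], γ > 0, and suppose y^k = x^k - (η/β)(u^k + ζ^k) and x^{k+1} = x^k + β(y^k - x^k) - η(F y^k - u^k) for some vectors u^k, ζ^k and map F. Then for any x⋆: ‖x^{k+1} - x⋆‖² ≤ ‖x^k - x⋆‖² - (1-β)‖x^{k+1} - x^k‖² - (β - γ)‖x^{k+1} - y^k‖² - β‖x^k - y^k‖² + (η²/γ)‖F y^k - u^k‖² - 2η⟨F y^k + ζ^k, y^k - x⋆⟩. -/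
open scoped RealInnerProductSpace

/-- One-iteration estimate for the forward-backward-forward splitting template. -/
theorem fbfs_one_iteration_estimate {p : ℕ}
    (F : EuclideanSpace ℝ (Fin p) → EuclideanSpace ℝ (Fin p))
    (η β γ : ℝ) (hη : 0 < η) (hβ0 : 0 < β) (hβ1 : β ≤ 1) (hγ : 0 < γ)
    (xk uk ζk yk xk1 : EuclideanSpace ℝ (Fin p))
    (hy : yk = xk - (η / β) • (uk + ζk))
    (hx : xk1 = xk + β • (yk - xk) - η • (F yk - uk))
    (xs : EuclideanSpace ℝ (Fin p)) :
    ‖xk1 - xs‖ ^ 2 ≤ ‖xk - xs‖ ^ 2 - (1 - β) * ‖xk1 - xk‖ ^ 2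
      - (β - γ) * ‖xk1 - yk‖ ^ 2 - β * ‖xk - yk‖ ^ 2
      + (η ^ 2 / γ) * ‖F yk - uk‖ ^ 2 - 2 * η * ⟪F yk + ζk, yk - xs⟫ := by
  set a := xk - yk with ha
  set b := η • (F yk - uk) with hb
  set s := xk - xs with hs
  have hβ : β ≠ 0 := ne_of_gt hβ0
  have haeq : (η / β) • (uk + ζk) = a := by rw [ha, hy]; module
  have h3 : η • (F yk + ζk) = β • a + b := by
    rw [← haeq, hb]
    rw [smul_smul]
    rw [mul_div_cancel₀ η hβ]
    module
  have hys : yk - xs = s - a := by rw [hs, ha]; module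
  have h1 : xk1 - xs = s - (β • a + b) := by rw [hx, hs, ha, hb]; module
  have h2 : xk1 - xk = -(β • a + b) := by rw [hx, ha, hb]; module
  have h4 : xk1 - yk = (1 - β) • a - b := by rw [hx, ha, hb]; module
  have hbn : ‖b‖ ^ 2 = η ^ 2 * ‖F yk - uk‖ ^ 2 := by
    rw [hb, norm_smul]
    rw [Real.norm_eq_abs, abs_of_pos hη]
    ring
  have hip : η * ⟪F yk + ζk, yk - xs⟫ = ⟪β • a + b, s - a⟫ := by
    rw [← real_inner_smul_left, h3, hys]
  have hFu : (η ^ 2 / γ) * ‖F yk - uk‖ ^ 2 = ‖b‖ ^ 2 / γ := by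
    rw [hbn]; ring
  have key : 0 ≤ ‖(γ * (1 - β)) • a + (1 - γ) • b‖ ^ 2 := sq_nonneg _
  rw [h1, h2, h4, hFu, norm_neg]
  have hgoal2 : 2 * η * ⟪F yk + ζk, yk - xs⟫ = 2 * ⟪β • a + b, s - a⟫ := by
    rw [← hip]; ring
  rw [hgoal2]
  simp only [← real_inner_self_eq_norm_sq] at key ⊢
  simp only [inner_sub_left, inner_sub_right, inner_add_left, inner_add_right,
    real_inner_smul_left, real_inner_smul_right] at key ⊢
  simp only [show (inner ℝ s a : ℝ) = inner ℝ a s from real_inner_comm a s,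
    show (inner ℝ s b : ℝ) = inner ℝ b s from real_inner_comm b s,
    show (inner ℝ b a : ℝ) = inner ℝ a b from real_inner_comm a b] at key ⊢
  rw [← sub_nonneg]
  set P := (inner ℝ a a : ℝ)
  set Q := (inner ℝ b b : ℝ)
  set R := (inner ℝ a b : ℝ)
  set S := (inner ℝ s s : ℝ)
  set T := (inner ℝ a s : ℝ)
  set U := (inner ℝ b s : ℝ)
  have key' := div_nonneg key hγ.le
  refine key'.trans_eq ?_
  field_simp
  ring
end

section
/- RFBS residual decrease under monotonicity: let Φ = F + T with F + T monotone (as an operator) and F L-Lipschitz with √2·Lη < 1. Suppose w^k = F x^k + ξ^k, ŵ^k = F y^{k-1} + ξ^k with ξ^k ∈ T x^k, and the updates satisfy x^{k+1} - x^k = -η ŵ^{k+1} and x^{k+1} - y^k = -η(ŵ^{k+1} - ŵ^k). Then with κ := 2L²η²/(1 - 2L²η²): ‖w^{k+1}‖² + κ‖w^{k+1} - ŵ^{k+1}‖² ≤ ‖w^k‖² + κ‖w^k - ŵ^k‖² - ((1 - 4L²η²)/(1 - 2L²η²))‖ŵ^{k+1} - w^k‖². -/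
open scoped RealInnerProductSpace

set_option maxHeartbeats 1600000 in
/-- RFBS residual decrease under monotonicity of `F + T`. -/
theorem rfbs_residual_decrease {p : ℕ}
    (F : EuclideanSpace ℝ (Fin p) → EuclideanSpace ℝ (Fin p))
    (T : EuclideanSpace ℝ (Fin p) → Set (EuclideanSpace ℝ (Fin p)))
    (L η : ℝ) (hη : 0 < η)
    (hmono : ∀ x1 ξ1 x2 ξ2, ξ1 ∈ T x1 → ξ2 ∈ T x2 →
      0 ≤ ⟪(F x1 + ξ1) - (F x2 + ξ2), x1 - x2⟫)
    (hL : ∀ x y, ‖F x - F y‖ ≤ L * ‖x - y‖)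
    (hLη : Real.sqrt 2 * L * η < 1)
    (xk xk1 yk ykm1 ξk ξk1 : EuclideanSpace ℝ (Fin p))
    (hξk : ξk ∈ T xk) (hξk1 : ξk1 ∈ T xk1)
    (hx : xk1 - xk = -(η • (F yk + ξk1)))
    (hxy : xk1 - yk = -(η • ((F yk + ξk1) - (F ykm1 + ξk)))) :
    ‖F xk1 + ξk1‖ ^ 2
        + (2 * L ^ 2 * η ^ 2 / (1 - 2 * L ^ 2 * η ^ 2)) * ‖F xk1 - F yk‖ ^ 2
      ≤ ‖F xk + ξk‖ ^ 2
        + (2 * L ^ 2 * η ^ 2 / (1 - 2 * L ^ 2 * η ^ 2)) * ‖F xk - F ykm1‖ ^ 2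
        - ((1 - 4 * L ^ 2 * η ^ 2) / (1 - 2 * L ^ 2 * η ^ 2))
            * ‖(F yk + ξk1) - (F xk + ξk)‖ ^ 2 := by
  rcases Nat.eq_zero_or_pos p with hp | hp
  · -- trivial case: the space is a subsingleton, all norms vanish
    subst hp
    have hz : ∀ v : EuclideanSpace ℝ (Fin 0), ‖v‖ = 0 := by
      intro v
      have : v = 0 := Subsingleton.elim v 0
      simp [this]
    simp [hz]
  · -- main case: L ≥ 0
    set a := F xk1 + ξk1 with ha
    set b := F yk + ξk1 with hb
    set c := F xk + ξk with hc
    set d := F ykm1 + ξk with hd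
    have hL0 : 0 ≤ L := by
      have h1 : ‖(EuclideanSpace.single (⟨0, hp⟩ : Fin p) (1:ℝ))
          - (0 : EuclideanSpace ℝ (Fin p))‖ = 1 := by
        simp [EuclideanSpace.norm_single]
      have h2 := hL (EuclideanSpace.single (⟨0, hp⟩ : Fin p) (1:ℝ)) 0
      rw [h1, mul_one] at h2
      exact le_trans (norm_nonneg _) h2
    have hs : 2 * L ^ 2 * η ^ 2 < 1 := by
      have h2 : Real.sqrt 2 ^ 2 = 2 := Real.sq_sqrt (by norm_num)
      nlinarith [Real.sqrt_nonneg 2, mul_nonneg (mul_nonneg (Real.sqrt_nonneg 2) hL0) hη.le]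
    have h1s : (0 : ℝ) < 1 - 2 * L ^ 2 * η ^ 2 := by linarith
    -- monotonicity consequence
    have hmon : ⟪a - c, b⟫ ≤ 0 := by
      have h := hmono xk1 ξk1 xk ξk hξk1 hξk
      rw [hx] at h
      rw [inner_neg_right, real_inner_smul_right] at h
      nlinarith
    -- Lipschitz consequence
    have hlip : ‖a - b‖ ≤ L * η * ‖b - d‖ := by
      have h := hL xk1 yk
      rw [hxy] at h
      rw [norm_neg, norm_smul, Real.norm_eq_abs, abs_of_pos hη] at h
      have : a - b = F xk1 - F yk := by rw [ha, hb]; abel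
      rw [this]
      calc ‖F xk1 - F yk‖ ≤ L * (η * ‖b - d‖) := h
        _ = L * η * ‖b - d‖ := by ring
    -- triangle inequality
    have htri : ‖b - d‖ ≤ ‖b - c‖ + ‖c - d‖ := by
      have : b - d = (b - c) + (c - d) := by abel
      rw [this]; exact norm_add_le _ _
    -- expansions
    have hA : ‖a‖ ^ 2 ≤ ‖c‖ ^ 2 - ‖b - c‖ ^ 2 + ‖a - b‖ ^ 2 := by
      have e1 : ‖a - b‖ ^ 2 = ‖a‖ ^ 2 - 2 * ⟪a, b⟫ + ‖b‖ ^ 2 := norm_sub_sq_real a b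
      have e2 : ‖b - c‖ ^ 2 = ‖b‖ ^ 2 - 2 * ⟪b, c⟫ + ‖c‖ ^ 2 := norm_sub_sq_real b c
      have e3 : ⟪a - c, b⟫ = ⟪a, b⟫ - ⟪c, b⟫ := inner_sub_left a c b
      have e4 : ⟪c, b⟫ = ⟪b, c⟫ := real_inner_comm b c
      nlinarith
    have hP : ‖a - b‖ ^ 2 ≤ L ^ 2 * η ^ 2 * ‖b - d‖ ^ 2 := by
      calc ‖a - b‖ ^ 2 ≤ (L * η * ‖b - d‖) ^ 2 := pow_le_pow_left₀ (norm_nonneg _) hlip 2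
        _ = L ^ 2 * η ^ 2 * ‖b - d‖ ^ 2 := by ring
    have hBD : ‖b - d‖ ^ 2 ≤ 2 * ‖b - c‖ ^ 2 + 2 * ‖c - d‖ ^ 2 := by
      have h := pow_le_pow_left₀ (norm_nonneg _) htri 2
      nlinarith [sq_nonneg (‖b - c‖ - ‖c - d‖)]
    -- core inequality (goal multiplied by 1 - 2L²η²)
    have key : (1 - 2 * L ^ 2 * η ^ 2) * ‖a‖ ^ 2 + 2 * L ^ 2 * η ^ 2 * ‖a - b‖ ^ 2
        ≤ (1 - 2 * L ^ 2 * η ^ 2) * ‖c‖ ^ 2 + 2 * L ^ 2 * η ^ 2 * ‖c - d‖ ^ 2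
          - (1 - 4 * L ^ 2 * η ^ 2) * ‖b - c‖ ^ 2 := by
      nlinarith [mul_le_mul_of_nonneg_left hA h1s.le, hP,
        mul_le_mul_of_nonneg_left hBD (mul_nonneg (sq_nonneg L) (sq_nonneg η))]
    have hab : F xk1 - F yk = a - b := by rw [ha, hb]; abel
    have hcd : F xk - F ykm1 = c - d := by rw [hc, hd]; abel
    rw [hab, hcd, ← sub_nonneg]
    have hrw : ‖c‖ ^ 2 + 2 * L ^ 2 * η ^ 2 / (1 - 2 * L ^ 2 * η ^ 2) * ‖c - d‖ ^ 2
          - (1 - 4 * L ^ 2 * η ^ 2) / (1 - 2 * L ^ 2 * η ^ 2) * ‖b - c‖ ^ 2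
          - (‖a‖ ^ 2 + 2 * L ^ 2 * η ^ 2 / (1 - 2 * L ^ 2 * η ^ 2) * ‖a - b‖ ^ 2)
        = ((1 - 2 * L ^ 2 * η ^ 2) * ‖c‖ ^ 2 + 2 * L ^ 2 * η ^ 2 * ‖c - d‖ ^ 2
            - (1 - 4 * L ^ 2 * η ^ 2) * ‖b - c‖ ^ 2
            - ((1 - 2 * L ^ 2 * η ^ 2) * ‖a‖ ^ 2 + 2 * L ^ 2 * η ^ 2 * ‖a - b‖ ^ 2))
          / (1 - 2 * L ^ 2 * η ^ 2) := by
      field_simp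
    rw [hrw]
    exact div_nonneg (by linarith) h1s.le
end

section
/- Golden-ratio one-iteration estimate: let T be 3-cyclically monotone, F L-Lipschitz, x⋆ ∈ zer(F + T), ω > 1, η > 0, γ > 0. Suppose the golden ratio iterates satisfy y^k = ((ω-1)/ω)x^k + (1/ω)y^{k-1}, x^{k+1} ∈ J_{ηT}(y^k - η F x^k) with ξ^{k+1} ∈ T x^{k+1} such that ηξ^{k+1} = y^k - x^{k+1} - ηF x^k. Then ω‖y^{k+1} - x⋆‖² + (ω-1)(ω-γ)‖x^{k+1} - x^k‖² ≤ ω‖y^k - x⋆‖² + ((ω-1)L²η²/γ)‖x^k - x^{k-1}‖² - ω(ω-1)‖x^k - y^k‖² - ((ω-1)(1-ω²+ω)/ω)‖x^{k+1} - y^k‖² - 2η(ω-1)⟨F x^k - F x⋆, x^k - x⋆⟩. -/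
open scoped RealInnerProductSpace

/-- Golden-ratio method one-iteration estimate. -/
theorem golden_ratio_one_iteration_estimate {p : ℕ}
    (F : EuclideanSpace ℝ (Fin p) → EuclideanSpace ℝ (Fin p))
    (T : EuclideanSpace ℝ (Fin p) → Set (EuclideanSpace ℝ (Fin p)))
    (L η γ ω : ℝ) (hη : 0 < η) (hγ : 0 < γ) (hω : 1 < ω)
    (h3 : ∀ x1 u1 x2 u2 x3 u3, u1 ∈ T x1 → u2 ∈ T x2 → u3 ∈ T x3 →
      0 ≤ ⟪u1, x1 - x2⟫ + ⟪u2, x2 - x3⟫ + ⟪u3, x3 - x1⟫)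
    (hL : ∀ x y, ‖F x - F y‖ ≤ L * ‖x - y‖)
    (xs ξs : EuclideanSpace ℝ (Fin p)) (hξs : ξs ∈ T xs) (hzero : F xs + ξs = 0)
    (xkm1 xk xk1 ykm1 yk yk1 ξk ξk1 : EuclideanSpace ℝ (Fin p))
    (hξk : ξk ∈ T xk) (hξk1 : ξk1 ∈ T xk1)
    (hyk : yk = ((ω - 1) / ω) • xk + (1 / ω) • ykm1)
    (hyk1 : yk1 = ((ω - 1) / ω) • xk1 + (1 / ω) • yk)
    (hresk : η • ξk = ykm1 - xk - η • F xkm1)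
    (hresk1 : η • ξk1 = yk - xk1 - η • F xk) :
    ω * ‖yk1 - xs‖ ^ 2 + (ω - 1) * (ω - γ) * ‖xk1 - xk‖ ^ 2
      ≤ ω * ‖yk - xs‖ ^ 2 + ((ω - 1) * L ^ 2 * η ^ 2 / γ) * ‖xk - xkm1‖ ^ 2
        - ω * (ω - 1) * ‖xk - yk‖ ^ 2
        - ((ω - 1) * (1 - ω ^ 2 + ω) / ω) * ‖xk1 - yk‖ ^ 2
        - 2 * η * (ω - 1) * ⟪F xk - F xs, xk - xs⟫ := by
  have hω0 : (ω : ℝ) ≠ 0 := by linarith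
  have hη0 : (η : ℝ) ≠ 0 := ne_of_gt hη
  have hγ0 : (γ : ℝ) ≠ 0 := ne_of_gt hγ
  have hξs' : ξs = -F xs := by
    have := hzero
    have : ξs = -F xs := by
      rw [← neg_eq_of_add_eq_zero_right hzero]
    exact this
  have hξk1' : ξk1 = η⁻¹ • (yk - xk1 - η • F xk) := by
    rw [← hresk1, inv_smul_smul₀ hη0]
  have hykm1 : ykm1 = ω • yk - (ω - 1) • xk := by
    rw [hyk]; match_scalars <;> field_simp <;> ring
  have hξk' : ξk = η⁻¹ • (ω • yk - (ω - 1) • xk - xk - η • F xkm1) := by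
    rw [← hykm1, ← hresk, inv_smul_smul₀ hη0]
  have hS := h3 xk1 ξk1 xs ξs xk ξk hξk1 hξs hξk
  rw [hξk1', hξk', hξs'] at hS
  set S : ℝ := ⟪η⁻¹ • (yk - xk1 - η • F xk), xk1 - xs⟫ + ⟪-F xs, xs - xk⟫
      + ⟪η⁻¹ • (ω • yk - (ω - 1) • xk - xk - η • F xkm1), xk - xk1⟫ with hSdef
  have hS2 : 0 ≤ 2 * (ω - 1) * η * S :=
    mul_nonneg (by nlinarith) hS
  -- Young inequality piece
  have hc : ⟪F xkm1 - F xk, xk1 - xk⟫ ≤ (L * ‖xk - xkm1‖) * ‖xk1 - xk‖ := by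
    refine le_trans (real_inner_le_norm _ _) ?_
    have := hL xkm1 xk
    rw [norm_sub_rev xkm1 xk] at this
    exact mul_le_mul_of_nonneg_right this (norm_nonneg _)
  have key : 2 * η * (L * ‖xk - xkm1‖) * ‖xk1 - xk‖
      ≤ L ^ 2 * η ^ 2 * ‖xk - xkm1‖ ^ 2 / γ + γ * ‖xk1 - xk‖ ^ 2 := by
    rw [← sub_nonneg]
    have h : L ^ 2 * η ^ 2 * ‖xk - xkm1‖ ^ 2 / γ + γ * ‖xk1 - xk‖ ^ 2
        - 2 * η * (L * ‖xk - xkm1‖) * ‖xk1 - xk‖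
        = (η * L * ‖xk - xkm1‖ - γ * ‖xk1 - xk‖) ^ 2 / γ := by
      field_simp; ring
    rw [h]; positivity
  have hyoung : 2 * η * (ω - 1) * ⟪F xkm1 - F xk, xk1 - xk⟫
      ≤ (ω - 1) * L ^ 2 * η ^ 2 / γ * ‖xk - xkm1‖ ^ 2 + (ω - 1) * γ * ‖xk1 - xk‖ ^ 2 := by
    have h1 := mul_le_mul_of_nonneg_left hc (by positivity : (0:ℝ) ≤ 2 * η)
    have h1' : 2 * η * ⟪F xkm1 - F xk, xk1 - xk⟫
        ≤ L ^ 2 * η ^ 2 * ‖xk - xkm1‖ ^ 2 / γ + γ * ‖xk1 - xk‖ ^ 2 := by linarith [h1, key]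
    have h2 := mul_le_mul_of_nonneg_left h1' (by linarith : (0:ℝ) ≤ ω - 1)
    calc 2 * η * (ω - 1) * ⟪F xkm1 - F xk, xk1 - xk⟫
        = (ω - 1) * (2 * η * ⟪F xkm1 - F xk, xk1 - xk⟫) := by ring
      _ ≤ (ω - 1) * (L ^ 2 * η ^ 2 * ‖xk - xkm1‖ ^ 2 / γ + γ * ‖xk1 - xk‖ ^ 2) := h2
      _ = (ω - 1) * L ^ 2 * η ^ 2 / γ * ‖xk - xkm1‖ ^ 2 + (ω - 1) * γ * ‖xk1 - xk‖ ^ 2 := by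
          ring
  -- main identity
  have hident : ω * ‖yk1 - xs‖ ^ 2 + (ω - 1) * (ω - γ) * ‖xk1 - xk‖ ^ 2
      = ω * ‖yk - xs‖ ^ 2 + ((ω - 1) * L ^ 2 * η ^ 2 / γ) * ‖xk - xkm1‖ ^ 2
        - ω * (ω - 1) * ‖xk - yk‖ ^ 2
        - ((ω - 1) * (1 - ω ^ 2 + ω) / ω) * ‖xk1 - yk‖ ^ 2
        - 2 * η * (ω - 1) * ⟪F xk - F xs, xk - xs⟫
        - 2 * (ω - 1) * η * S
        - ((ω - 1) * L ^ 2 * η ^ 2 / γ * ‖xk - xkm1‖ ^ 2 + (ω - 1) * γ * ‖xk1 - xk‖ ^ 2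
            - 2 * η * (ω - 1) * ⟪F xkm1 - F xk, xk1 - xk⟫) := by
    rw [hSdef, hyk1]
    simp only [← real_inner_self_eq_norm_sq]
    simp only [inner_sub_left, inner_sub_right, inner_add_left, inner_add_right,
      real_inner_smul_left, real_inner_smul_right, inner_neg_left, inner_neg_right]
    simp only [real_inner_comm xs xk, real_inner_comm xs xkm1, real_inner_comm xs xk1,
      real_inner_comm xs yk, real_inner_comm xs (F xk), real_inner_comm xs (F xs),
      real_inner_comm xs (F xkm1), real_inner_comm xk xkm1, real_inner_comm xk xk1,
      real_inner_comm xk yk, real_inner_comm xk (F xk), real_inner_comm xk (F xs),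
      real_inner_comm xk (F xkm1), real_inner_comm xkm1 xk1, real_inner_comm xkm1 yk,
      real_inner_comm xkm1 (F xk), real_inner_comm xkm1 (F xs), real_inner_comm xkm1 (F xkm1),
      real_inner_comm xk1 yk, real_inner_comm xk1 (F xk), real_inner_comm xk1 (F xs),
      real_inner_comm xk1 (F xkm1), real_inner_comm yk (F xk), real_inner_comm yk (F xs),
      real_inner_comm yk (F xkm1), real_inner_comm (F xk) (F xs),
      real_inner_comm (F xk) (F xkm1), real_inner_comm (F xs) (F xkm1)]
    field_simp
    ring
  rw [hident]
  clear_value S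
  linarith [hS2, hyoung]
end

section
/- Potential decrease for the extra-anchored gradient (EAG) method on monotone inclusions: let F be monotone and L-Lipschitz, T 3-cyclically monotone, and consider iterates satisfying y^k = τ_k x⁰ + (1-τ_k)x^k - η(1-τ_k) w̃^k and x^{k+1} = τ_k x⁰ + (1-τ_k)x^k - η ŵ^{k+1}, where w̃^k = F x^k + ζ^k (ζ^k ∈ T y^k), ŵ^{k+1} = F y^k + ξ^{k+1}, w^k = F x^k + ξ^k (ξ^i ∈ T x^i), τ_k = 1/(k+2), 0 < η ≤ 1/L. Define V_k := (η b_0 (k+1)²/2)‖w^k‖² + b_0(k+1)⟨w^k, x^k - x⁰⟩ for fixed b_0 > 0. Then V_{k+1} ≤ V_k for all k ≥ 0. -/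
set_option maxHeartbeats 2000000


open scoped RealInnerProductSpace

/-- Potential decrease for the extra-anchored gradient (EAG) method on monotone inclusions. -/
theorem eag_potential_decrease {p : ℕ}
    (F : EuclideanSpace ℝ (Fin p) → EuclideanSpace ℝ (Fin p))
    (T : EuclideanSpace ℝ (Fin p) → Set (EuclideanSpace ℝ (Fin p)))
    (L η b0 : ℝ) (hL : 0 < L) (hη0 : 0 < η) (hη1 : η ≤ 1 / L) (hb0 : 0 < b0)
    (hmono : ∀ x y, 0 ≤ ⟪F x - F y, x - y⟫)
    (hLip : ∀ x y, ‖F x - F y‖ ≤ L * ‖x - y‖)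
    (h3 : ∀ x1 u1 x2 u2 x3 u3, u1 ∈ T x1 → u2 ∈ T x2 → u3 ∈ T x3 →
      0 ≤ ⟪u1, x1 - x2⟫ + ⟪u2, x2 - x3⟫ + ⟪u3, x3 - x1⟫)
    (x y ξ ζ : ℕ → EuclideanSpace ℝ (Fin p))
    (hξ : ∀ k, ξ k ∈ T (x k)) (hζ : ∀ k, ζ k ∈ T (y k))
    (hy : ∀ k : ℕ, y k = (1 / ((k : ℝ) + 2)) • x 0 + (1 - 1 / ((k : ℝ) + 2)) • x k
        - (η * (1 - 1 / ((k : ℝ) + 2))) • (F (x k) + ζ k))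
    (hx : ∀ k : ℕ, x (k + 1) = (1 / ((k : ℝ) + 2)) • x 0 + (1 - 1 / ((k : ℝ) + 2)) • x k
        - η • (F (y k) + ξ (k + 1))) :
    ∀ k : ℕ,
      η * b0 * ((k : ℝ) + 2) ^ 2 / 2 * ‖F (x (k + 1)) + ξ (k + 1)‖ ^ 2
          + b0 * ((k : ℝ) + 2) * ⟪F (x (k + 1)) + ξ (k + 1), x (k + 1) - x 0⟫
        ≤ η * b0 * ((k : ℝ) + 1) ^ 2 / 2 * ‖F (x k) + ξ k‖ ^ 2
          + b0 * ((k : ℝ) + 1) * ⟪F (x k) + ξ k, x k - x 0⟫ := by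
  intro k
  have hk0 : (0 : ℝ) ≤ (k : ℝ) := Nat.cast_nonneg k
  have hY := hy k
  have hX := hx k
  -- the three inequality ingredients
  have h2 : 0 ≤ ⟪ξ k, x k - y k⟫ + ⟪ζ k, y k - x (k + 1)⟫
      + ⟪ξ (k + 1), x (k + 1) - x k⟫ :=
    h3 (x k) (ξ k) (y k) (ζ k) (x (k + 1)) (ξ (k + 1)) (hξ k) (hζ k) (hξ (k + 1))
  have h6 : 0 ≤ ⟪F (x (k + 1)) - F (y k), x (k + 1) - y k⟫ := hmono (x (k + 1)) (y k)
  have h6' : 0 ≤ ⟪F (x (k + 1)) - F (x k), x (k + 1) - x k⟫ := hmono (x (k + 1)) (x k)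
  have hηL : η * L ≤ 1 := by
    rw [le_div_iff₀ hL] at hη1; linarith
  have h5 : 0 ≤ ‖x (k + 1) - y k‖ ^ 2 - η ^ 2 * ‖F (x (k + 1)) - F (y k)‖ ^ 2 := by
    have hlip := hLip (x (k + 1)) (y k)
    have hn1 : 0 ≤ ‖F (x (k + 1)) - F (y k)‖ := norm_nonneg _
    have hn2 : 0 ≤ ‖x (k + 1) - y k‖ := norm_nonneg _
    have hηs : η * ‖F (x (k + 1)) - F (y k)‖ ≤ ‖x (k + 1) - y k‖ := by
      calc η * ‖F (x (k + 1)) - F (y k)‖ ≤ η * (L * ‖x (k + 1) - y k‖) := by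
            exact mul_le_mul_of_nonneg_left hlip hη0.le
        _ = (η * L) * ‖x (k + 1) - y k‖ := by ring
        _ ≤ 1 * ‖x (k + 1) - y k‖ := mul_le_mul_of_nonneg_right hηL hn2
        _ = ‖x (k + 1) - y k‖ := one_mul _
    nlinarith [mul_nonneg hη0.le hn1]
  have hsq : 0 ≤ ‖ζ k - ξ k‖ ^ 2 := sq_nonneg _
  -- the key algebraic identity
  have key :
      (η * b0 * ((k : ℝ) + 1) ^ 2 / 2 * ‖F (x k) + ξ k‖ ^ 2
          + b0 * ((k : ℝ) + 1) * ⟪F (x k) + ξ k, x k - x 0⟫)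
        - (η * b0 * ((k : ℝ) + 2) ^ 2 / 2 * ‖F (x (k + 1)) + ξ (k + 1)‖ ^ 2
          + b0 * ((k : ℝ) + 2) * ⟪F (x (k + 1)) + ξ (k + 1), x (k + 1) - x 0⟫)
      = (b0 * ((k : ℝ) + 1) * ((k : ℝ) + 2)) *
            (⟪ξ k, x k - y k⟫ + ⟪ζ k, y k - x (k + 1)⟫ + ⟪ξ (k + 1), x (k + 1) - x k⟫)
        + (b0 * ((k : ℝ) + 1) * ((k : ℝ) + 2)) *
            ⟪F (x (k + 1)) - F (x k), x (k + 1) - x k⟫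
        + (b0 * ((k : ℝ) + 2) ^ 2 / (2 * η)) *
            (‖x (k + 1) - y k‖ ^ 2 - η ^ 2 * ‖F (x (k + 1)) - F (y k)‖ ^ 2)
        + (η * b0 * ((k : ℝ) + 1) ^ 2 / 2) * ‖ζ k - ξ k‖ ^ 2 := by
    have hk2 : ((k : ℝ) + 2) ≠ 0 := by positivity
    set X0 := x 0 with hX0
    set XK := x k with hXK
    set A := F (x k) with hA
    set B := F (y k) with hB
    set C := F (x (k + 1)) with hC
    set Z := ζ k with hZ
    set S := ξ (k + 1) with hS
    set Tt := ξ k with hTt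
    rw [hX, hY]
    simp only [← real_inner_self_eq_norm_sq, inner_add_left, inner_add_right,
      inner_sub_left, inner_sub_right, real_inner_smul_left, real_inner_smul_right]
    simp only [real_inner_comm]
    field_simp
    ring
  have c2 : 0 ≤ b0 * ((k : ℝ) + 1) * ((k : ℝ) + 2) := by positivity
  have c5 : 0 ≤ b0 * ((k : ℝ) + 2) ^ 2 / (2 * η) := by positivity
  have cd : 0 ≤ η * b0 * ((k : ℝ) + 1) ^ 2 / 2 := by positivity
  have t1 := mul_nonneg c2 h2
  have t2 := mul_nonneg c2 h6'
  have t3 := mul_nonneg c5 h5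
  have t4 := mul_nonneg cd hsq
  linarith [key, t1, t2, t3, t4]
end

section
/- O(1/k) last-iterate rate of EAG: under the assumptions of the EAG potential lemma (F monotone L-Lipschitz, T 3-cyclically monotone with zer(F+T) ∋ x⋆, τ_k = 1/(k+2), η ∈ (0, 1/L]), the iterates satisfy ‖F x^k + ξ^k‖² ≤ (4‖x⁰ - x⋆‖² + 2η²‖F x⁰ + ξ⁰‖²)/(η²(k+1)²) for all k ≥ 0, where ξ^k ∈ T x^k is the element produced by the resolvent step. -/
open scoped RealInnerProductSpace

set_option maxHeartbeats 2000000 in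
/-- Key one-step potential decrease for EAG. -/
lemma eag_step {E : Type*} [NormedAddCommGroup E] [InnerProductSpace ℝ E]
    (η κ : ℝ) (hη : 0 < η) (hκ : 0 ≤ κ)
    (A P Q R fp fq fr u v s : E)
    (hQ : Q = (1/(κ+2)) • A + (1 - 1/(κ+2)) • P - (η * (1 - 1/(κ+2))) • (fp + v))
    (hR : R = (1/(κ+2)) • A + (1 - 1/(κ+2)) • P - η • (fq + s))
    (h1 : 0 ≤ ⟪fp - fr, P - R⟫)
    (h2 : η * ‖fq - fr‖ ≤ ‖Q - R‖)
    (h3 : 0 ≤ ⟪u, P - Q⟫ + ⟪v, Q - R⟫ + ⟪s, R - P⟫) :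
    η*(κ+2)^2/2 * ‖fr + s‖^2 + (κ+2) * ⟪fr + s, R - A⟫
      ≤ η*(κ+1)^2/2 * ‖fp + u‖^2 + (κ+1) * ⟪fp + u, P - A⟫ := by
  have hκ2 : (κ:ℝ) + 2 ≠ 0 := by positivity
  have hηne : η ≠ 0 := ne_of_gt hη
  have h2' : η^2 * ‖fq - fr‖^2 ≤ ‖Q - R‖^2 := by
    nlinarith [mul_self_le_mul_self (mul_nonneg hη.le (norm_nonneg (fq - fr))) h2,
      norm_nonneg (Q - R), norm_nonneg (fq - fr)]
  have key : η*(κ+1)^2/2 * ‖fp + u‖^2 + (κ+1) * ⟪fp + u, P - A⟫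
      - (η*(κ+2)^2/2 * ‖fr + s‖^2 + (κ+2) * ⟪fr + s, R - A⟫)
      = (κ+1)*(κ+2) * ⟪fp - fr, P - R⟫
        + (κ+2)^2/(2*η) * (‖Q - R‖^2 - η^2 * ‖fq - fr‖^2)
        + (κ+1)*(κ+2) * (⟪u, P - Q⟫ + ⟪v, Q - R⟫ + ⟪s, R - P⟫)
        + η*(κ+1)^2/2 * ‖u - v‖^2 := by
    subst hQ hR
    simp only [← real_inner_self_eq_norm_sq, inner_sub_left, inner_sub_right,
      inner_add_left, inner_add_right, real_inner_smul_left, real_inner_smul_right]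
    simp only [real_inner_comm P A, real_inner_comm fp A, real_inner_comm fp P,
      real_inner_comm fq A, real_inner_comm fq P, real_inner_comm fq fp,
      real_inner_comm fr A, real_inner_comm fr P, real_inner_comm fr fp,
      real_inner_comm fr fq, real_inner_comm u A, real_inner_comm u P,
      real_inner_comm u fp, real_inner_comm u fq, real_inner_comm u fr,
      real_inner_comm v A, real_inner_comm v P, real_inner_comm v fp,
      real_inner_comm v fq, real_inner_comm v fr, real_inner_comm v u,
      real_inner_comm s A, real_inner_comm s P, real_inner_comm s fp,
      real_inner_comm s fq, real_inner_comm s fr, real_inner_comm s u,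
      real_inner_comm s v]
    field_simp
    ring
  have t1 : 0 ≤ (κ+1)*(κ+2) * ⟪fp - fr, P - R⟫ := by positivity
  have t3 : 0 ≤ (κ+1)*(κ+2) * (⟪u, P - Q⟫ + ⟪v, Q - R⟫ + ⟪s, R - P⟫) := by positivity
  have t2 : 0 ≤ (κ+2)^2/(2*η) * (‖Q - R‖^2 - η^2 * ‖fq - fr‖^2) := by
    apply mul_nonneg (by positivity); linarith
  have t4 : 0 ≤ η*(κ+1)^2/2 * ‖u - v‖^2 := by positivity
  linarith

/-- `O(1/k)` last-iterate rate of the extra-anchored gradient (EAG) method. -/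
theorem eag_last_iterate_rate {p : ℕ}
    (F : EuclideanSpace ℝ (Fin p) → EuclideanSpace ℝ (Fin p))
    (T : EuclideanSpace ℝ (Fin p) → Set (EuclideanSpace ℝ (Fin p)))
    (L η : ℝ) (hL : 0 < L) (hη0 : 0 < η) (hη1 : η ≤ 1 / L)
    (hmono : ∀ x y, 0 ≤ ⟪F x - F y, x - y⟫)
    (hLip : ∀ x y, ‖F x - F y‖ ≤ L * ‖x - y‖)
    (h3 : ∀ x1 u1 x2 u2 x3 u3, u1 ∈ T x1 → u2 ∈ T x2 → u3 ∈ T x3 →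
      0 ≤ ⟪u1, x1 - x2⟫ + ⟪u2, x2 - x3⟫ + ⟪u3, x3 - x1⟫)
    (xs ξs : EuclideanSpace ℝ (Fin p)) (hξs : ξs ∈ T xs) (hzero : F xs + ξs = 0)
    (x y ξ ζ : ℕ → EuclideanSpace ℝ (Fin p))
    (hξ : ∀ k, ξ k ∈ T (x k)) (hζ : ∀ k, ζ k ∈ T (y k))
    (hy : ∀ k : ℕ, y k = (1 / ((k : ℝ) + 2)) • x 0 + (1 - 1 / ((k : ℝ) + 2)) • x k
        - (η * (1 - 1 / ((k : ℝ) + 2))) • (F (x k) + ζ k))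
    (hx : ∀ k : ℕ, x (k + 1) = (1 / ((k : ℝ) + 2)) • x 0 + (1 - 1 / ((k : ℝ) + 2)) • x k
        - η • (F (y k) + ξ (k + 1))) :
    ∀ k : ℕ, ‖F (x k) + ξ k‖ ^ 2
      ≤ (4 * ‖x 0 - xs‖ ^ 2 + 2 * η ^ 2 * ‖F (x 0) + ξ 0‖ ^ 2)
          / (η ^ 2 * ((k : ℝ) + 1) ^ 2) := by
  have hηL : η * L ≤ 1 := by
    rw [le_div_iff₀ hL] at hη1; linarith
  -- one-step potential decrease
  have hdec : ∀ n : ℕ,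
      η*((n:ℝ)+2)^2/2 * ‖F (x (n+1)) + ξ (n+1)‖^2
        + ((n:ℝ)+2) * ⟪F (x (n+1)) + ξ (n+1), x (n+1) - x 0⟫
      ≤ η*((n:ℝ)+1)^2/2 * ‖F (x n) + ξ n‖^2
        + ((n:ℝ)+1) * ⟪F (x n) + ξ n, x n - x 0⟫ := by
    intro n
    have h2 : η * ‖F (y n) - F (x (n+1))‖ ≤ ‖y n - x (n+1)‖ := by
      have hl := hLip (y n) (x (n+1))
      have h5 := mul_le_mul_of_nonneg_left hl hη0.le
      have h6 := mul_nonneg (by linarith : (0:ℝ) ≤ 1 - η*L) (norm_nonneg (y n - x (n+1)))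
      nlinarith
    exact eag_step η (n:ℝ) hη0 (Nat.cast_nonneg n) (x 0) (x n) (y n) (x (n+1))
      (F (x n)) (F (y n)) (F (x (n+1))) (ξ n) (ζ n) (ξ (n+1))
      (hy n) (hx n) (hmono (x n) (x (n+1))) h2
      (h3 (x n) (ξ n) (y n) (ζ n) (x (n+1)) (ξ (n+1)) (hξ n) (hζ n) (hξ (n+1)))
  -- the potential is bounded by its initial value
  have hVle : ∀ k : ℕ,
      η*((k:ℝ)+1)^2/2 * ‖F (x k) + ξ k‖^2
        + ((k:ℝ)+1) * ⟪F (x k) + ξ k, x k - x 0⟫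
      ≤ η/2 * ‖F (x 0) + ξ 0‖^2 := by
    intro k
    induction k with
    | zero =>
      rw [sub_self, inner_zero_right]
      push_cast
      apply le_of_eq; ring
    | succ n ih =>
      have h := hdec n
      push_cast
      push_cast at h
      linarith
  -- ⟪w k, x k - xs⟫ ≥ 0
  have hpos : ∀ k : ℕ, 0 ≤ ⟪F (x k) + ξ k, x k - xs⟫ := by
    intro k
    have hm := hmono (x k) xs
    have hc := h3 (x k) (ξ k) xs ξs xs ξs (hξ k) hξs hξs
    have hFxs : F xs = -ξs := eq_neg_of_add_eq_zero_left hzero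
    have e : ⟪F (x k) + ξ k, x k - xs⟫
        = ⟪F (x k) - F xs, x k - xs⟫
          + (⟪ξ k, x k - xs⟫ + ⟪ξs, xs - xs⟫ + ⟪ξs, xs - x k⟫) := by
      rw [hFxs]
      simp only [inner_sub_left, inner_add_left, inner_sub_right, inner_neg_left,
        sub_self, inner_zero_right]
      ring
    linarith
  intro k
  have hV := hVle k
  have hp := hpos k
  have hsplit : ⟪F (x k) + ξ k, x k - x 0⟫
      = ⟪F (x k) + ξ k, x k - xs⟫ + ⟪F (x k) + ξ k, xs - x 0⟫ := by
    simp only [inner_sub_right]; ring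
  have hcs : -(‖F (x k) + ξ k‖ * ‖x 0 - xs‖) ≤ ⟪F (x k) + ξ k, xs - x 0⟫ := by
    have h7 := real_inner_le_norm (F (x k) + ξ k) (x 0 - xs)
    have h8 : ⟪F (x k) + ξ k, xs - x 0⟫ = -⟪F (x k) + ξ k, x 0 - xs⟫ := by
      simp only [inner_sub_right]; ring
    linarith
  have hk1 : (0:ℝ) ≤ (k:ℝ)+1 := by positivity
  rw [hsplit] at hV
  have hV2 : η*((k:ℝ)+1)^2/2 * ‖F (x k) + ξ k‖^2
      - ((k:ℝ)+1) * (‖F (x k) + ξ k‖ * ‖x 0 - xs‖) ≤ η/2 * ‖F (x 0) + ξ 0‖^2 := by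
    have h9 := mul_le_mul_of_nonneg_left hcs hk1
    have h10 := mul_nonneg hk1 hp
    nlinarith
  rw [le_div_iff₀ (by positivity)]
  nlinarith [mul_le_mul_of_nonneg_left hV2 (by linarith : (0:ℝ) ≤ 2*η),
    sq_nonneg (η*((k:ℝ)+1)*‖F (x k) + ξ k‖ - 2*‖x 0 - xs‖), hη0,
    norm_nonneg (F (x k) + ξ k), norm_nonneg (x 0 - xs)]
end

section
/- Lower bound on the anchored potential under co-hypomonotonicity: let Φ be ρ-co-hypomonotone with x⋆ ∈ zer Φ, w^k ∈ Φ x^k, and let a_k = b_0((η-2ρ)(k+1) + 2ρ)(k+1)/2, b_k = b_0(k+1) for b_0 > 0 and η > 2ρ. Then a_k‖w^k‖² + b_k⟨w^k, x^k - x⁰⟩ ≥ (b_0(η-2ρ)(k+1)²/4)‖w^k‖² - (b_0/(η-2ρ))‖x⁰ - x⋆‖². -/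
open scoped RealInnerProductSpace

/-- Lower bound on the anchored potential under co-hypomonotonicity. -/
theorem anchored_potential_lower_bound {p : ℕ}
    (Φ : EuclideanSpace ℝ (Fin p) → Set (EuclideanSpace ℝ (Fin p)))
    (ρ η b0 : ℝ) (hρ : 0 ≤ ρ) (hb0 : 0 < b0) (hη : 2 * ρ < η)
    (hco : ∀ x u y v, u ∈ Φ x → v ∈ Φ y → -ρ * ‖u - v‖ ^ 2 ≤ ⟪u - v, x - y⟫)
    (xs : EuclideanSpace ℝ (Fin p)) (hxs : (0 : EuclideanSpace ℝ (Fin p)) ∈ Φ xs)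
    (k : ℕ) (x0 xk wk : EuclideanSpace ℝ (Fin p)) (hw : wk ∈ Φ xk) :
    b0 * (η - 2 * ρ) * ((k : ℝ) + 1) ^ 2 / 4 * ‖wk‖ ^ 2
        - b0 / (η - 2 * ρ) * ‖x0 - xs‖ ^ 2
      ≤ b0 * ((η - 2 * ρ) * ((k : ℝ) + 1) + 2 * ρ) * ((k : ℝ) + 1) / 2 * ‖wk‖ ^ 2
        + b0 * ((k : ℝ) + 1) * ⟪wk, xk - x0⟫ := by
  have hc : (0:ℝ) < η - 2 * ρ := by linarith
  have h1 := hco xk wk xs 0 hw hxs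
  simp only [sub_zero] at h1
  have hsplit : ⟪wk, xk - x0⟫ = ⟪wk, xk - xs⟫ + ⟪wk, xs - x0⟫ := by
    rw [← inner_add_right]; congr 1; abel
  have hCS : ⟪wk, x0 - xs⟫ ≤ ‖wk‖ * ‖x0 - xs‖ := real_inner_le_norm wk (x0 - xs)
  have hneg : ⟪wk, xs - x0⟫ = -⟪wk, x0 - xs⟫ := by
    rw [← inner_neg_right]; congr 1; abel
  have ht : (0:ℝ) ≤ (k:ℝ) := Nat.cast_nonneg k
  have hsq : (0:ℝ) ≤ ((η - 2*ρ) * ((k:ℝ)+1) * ‖wk‖ - 2 * ‖x0 - xs‖)^2 := sq_nonneg _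
  have hwn : (0:ℝ) ≤ ‖wk‖ := norm_nonneg _
  rw [hsplit, hneg]
  have key : b0 * ((k:ℝ)+1) * (‖wk‖ * ‖x0 - xs‖)
      ≤ b0 * (η - 2*ρ) * ((k:ℝ)+1)^2 / 4 * ‖wk‖^2 + b0 / (η - 2*ρ) * ‖x0 - xs‖^2 := by
    rw [div_mul_eq_mul_div, div_mul_eq_mul_div, div_add_div _ _ (by norm_num : (4:ℝ) ≠ 0) hc.ne',
      le_div_iff₀ (by positivity)]
    nlinarith [mul_nonneg hb0.le hsq]
  nlinarith [mul_le_mul_of_nonneg_left hCS (by positivity : (0:ℝ) ≤ b0 * ((k:ℝ)+1)),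
    mul_le_mul_of_nonneg_left h1 (by positivity : (0:ℝ) ≤ b0 * ((k:ℝ)+1)), sq_nonneg ‖wk‖,
    mul_nonneg (mul_nonneg (mul_nonneg hb0.le hρ) (by positivity : (0:ℝ) ≤ (k:ℝ)*((k:ℝ)+1))) (sq_nonneg ‖wk‖)]
end

section
/- O(1/k) rate of the fast extragradient (FEG) for co-hypomonotone inclusions: assume Φ = F + T is ρ-co-hypomonotone, F is L-Lipschitz with 2Lρ < 1, x⋆ ∈ zer Φ. Consider iterates with w^k = F x^k + ξ^k (ξ^k ∈ T x^k), ŵ^{k+1} = F y^k + ξ^{k+1}, satisfying y^k = x^k + τ_k(x⁰ - x^k) - (η̂_k - β_k)w^k and x^{k+1} = x^k + τ_k(x⁰ - x^k) - η ŵ^{k+1} + β_k w^k, where τ_k = 1/(k+2), β_k = 2ρ(1-τ_k), η ∈ (2ρ, 1/L], η̂_k = (1-τ_k)η. Then for all k ≥ 0: ‖F x^k + ξ^k‖² ≤ (4‖x⁰ - x⋆‖² + 2η(η - 2ρ)‖F x⁰ + ξ⁰‖²)/((η - 2ρ)²(k+1)²). -/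
set_option maxHeartbeats 1000000


open scoped RealInnerProductSpace

/-- Scalar core of the one-step potential decrease for FEG. -/
lemma feg_key (η ρ c nw np nv pw pv pd wv wd : ℝ)
    (hη : 0 < η) (hc : 2 ≤ c)
    (h1 : -ρ*(np - 2*pw + nw) ≤ (-(1/c)*pd - η*pv + 2*ρ*(1-1/c)*pw)
        - (-(1/c)*wd - η*wv + 2*ρ*(1-1/c)*nw))
    (h2 : η^2*(np - 2*pv + nv) ≤ ((1-1/c)*η)^2*nw - 2*(((1-1/c)*η)*η)*wv + η^2*nv) :
    ((η-2*ρ)*c+2*ρ)*c/2*np + c*((1-1/c)*pd - η*pv + 2*ρ*(1-1/c)*pw)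
      ≤ ((η-2*ρ)*(c-1)+2*ρ)*(c-1)/2*nw + (c-1)*wd := by
  have hc0 : (0:ℝ) < c := by linarith
  have hcne : c ≠ 0 := ne_of_gt hc0
  have key : ((η-2*ρ)*(c-1)+2*ρ)*(c-1)/2*nw + (c-1)*wd
        - (((η-2*ρ)*c+2*ρ)*c/2*np + c*((1-1/c)*pd - η*pv + 2*ρ*(1-1/c)*pw))
      = (c-1)*c*(((-(1/c)*pd - η*pv + 2*ρ*(1-1/c)*pw)
            - (-(1/c)*wd - η*wv + 2*ρ*(1-1/c)*nw)) - (-ρ*(np - 2*pw + nw)))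
        + (c^2/(2*η))*((((1-1/c)*η)^2*nw - 2*(((1-1/c)*η)*η)*wv + η^2*nv)
            - η^2*(np - 2*pv + nv)) := by
    field_simp
    ring
  have m1 : 0 ≤ (c-1)*c*(((-(1/c)*pd - η*pv + 2*ρ*(1-1/c)*pw)
      - (-(1/c)*wd - η*wv + 2*ρ*(1-1/c)*nw)) - (-ρ*(np - 2*pw + nw))) := by
    have : 0 ≤ (c-1)*c := by nlinarith
    exact mul_nonneg this (by linarith)
  have m2 : 0 ≤ (c^2/(2*η))*((((1-1/c)*η)^2*nw - 2*(((1-1/c)*η)*η)*wv + η^2*nv)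
      - η^2*(np - 2*pv + nv)) := by
    have : 0 ≤ c^2/(2*η) := by positivity
    exact mul_nonneg this (by linarith)
  linarith [key, m1, m2]

/-- `O(1/k)` last-iterate rate of the fast extragradient (FEG) method for
co-hypomonotone inclusions. -/
theorem feg_last_iterate_rate {p : ℕ}
    (F : EuclideanSpace ℝ (Fin p) → EuclideanSpace ℝ (Fin p))
    (T : EuclideanSpace ℝ (Fin p) → Set (EuclideanSpace ℝ (Fin p)))
    (L ρ η : ℝ) (hρ : 0 ≤ ρ) (hLρ : 2 * L * ρ < 1)
    (hLip : ∀ x y, ‖F x - F y‖ ≤ L * ‖x - y‖)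
    (hco : ∀ x1 ξ1 x2 ξ2, ξ1 ∈ T x1 → ξ2 ∈ T x2 →
      -ρ * ‖(F x1 + ξ1) - (F x2 + ξ2)‖ ^ 2 ≤ ⟪(F x1 + ξ1) - (F x2 + ξ2), x1 - x2⟫)
    (xs ξs : EuclideanSpace ℝ (Fin p)) (hξs : ξs ∈ T xs) (hzero : F xs + ξs = 0)
    (hη0 : 2 * ρ < η) (hη1 : η ≤ 1 / L)
    (x y ξ : ℕ → EuclideanSpace ℝ (Fin p))
    (hξ : ∀ k, ξ k ∈ T (x k))
    (hy : ∀ k : ℕ, y k = x k + (1 / ((k : ℝ) + 2)) • (x 0 - x k)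
        - ((1 - 1 / ((k : ℝ) + 2)) * η - 2 * ρ * (1 - 1 / ((k : ℝ) + 2)))
            • (F (x k) + ξ k))
    (hx : ∀ k : ℕ, x (k + 1) = x k + (1 / ((k : ℝ) + 2)) • (x 0 - x k)
        - η • (F (y k) + ξ (k + 1))
        + (2 * ρ * (1 - 1 / ((k : ℝ) + 2))) • (F (x k) + ξ k)) :
    ∀ k : ℕ, ‖F (x k) + ξ k‖ ^ 2
      ≤ (4 * ‖x 0 - xs‖ ^ 2 + 2 * η * (η - 2 * ρ) * ‖F (x 0) + ξ 0‖ ^ 2)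
          / ((η - 2 * ρ) ^ 2 * ((k : ℝ) + 1) ^ 2) := by
  have hη : (0:ℝ) < η := lt_of_le_of_lt (by positivity) hη0
  have hL : (0:ℝ) < L := one_div_pos.mp (lt_of_lt_of_le hη hη1)
  have hηL : η * L ≤ 1 := (le_div_iff₀ hL).mp hη1
  set w : ℕ → EuclideanSpace ℝ (Fin p) := fun n => F (x n) + ξ n with hw
  set V : ℕ → ℝ := fun n =>
      ((η-2*ρ)*((n:ℝ)+1)+2*ρ)*((n:ℝ)+1)/2 * ‖w n‖^2 + ((n:ℝ)+1) * ⟪w n, x n - x 0⟫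
    with hV
  -- one-step decrease of the potential
  have hstep : ∀ k, V (k+1) ≤ V k := by
    intro k
    set c : ℝ := (k:ℝ) + 2 with hcdef
    have hc : (2:ℝ) ≤ c := by rw [hcdef]; have : (0:ℝ) ≤ (k:ℝ) := Nat.cast_nonneg k; linarith
    have hc0 : (0:ℝ) < c := by linarith
    set W := w k with hW
    set Wp := w (k+1) with hWp
    set Vv := F (y k) + ξ (k+1) with hVv
    set D := x k - x 0 with hD
    -- vector identities from the recursion
    have hD' : x (k+1) - x 0 = (1-1/c) • D - η • Vv + (2*ρ*(1-1/c)) • W := by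
      rw [hx k]; simp only [hD, hW, hw, hcdef]; module
    have hDx : x (k+1) - x k = (-(1/c)) • D - η • Vv + (2*ρ*(1-1/c)) • W := by
      rw [hx k]; simp only [hD, hW, hw, hcdef]; module
    have hXY : x (k+1) - y k = ((1-1/c)*η) • W - η • Vv := by
      rw [hx k, hVv, hy k]; simp only [hW, hw, hcdef]; module
    -- the co-hypomonotonicity inequality in scalar form
    have hco' := hco (x (k+1)) (ξ (k+1)) (x k) (ξ k) (hξ _) (hξ _)
    have hWW : F (x (k+1)) + ξ (k+1) - (F (x k) + ξ k) = Wp - W := by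
      simp [hWp, hW, hw]
    rw [hWW] at hco'
    have h1 : -ρ*(‖Wp‖^2 - 2*⟪Wp,W⟫ + ‖W‖^2)
        ≤ (-(1/c)*⟪Wp,D⟫ - η*⟪Wp,Vv⟫ + 2*ρ*(1-1/c)*⟪Wp,W⟫)
          - (-(1/c)*⟪W,D⟫ - η*⟪W,Vv⟫ + 2*ρ*(1-1/c)*‖W‖^2) := by
      have e1 : ‖Wp - W‖^2 = ‖Wp‖^2 - 2*⟪Wp,W⟫ + ‖W‖^2 := norm_sub_sq_real Wp W
      have e2 : ⟪Wp - W, x (k+1) - x k⟫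
          = (-(1/c)*⟪Wp,D⟫ - η*⟪Wp,Vv⟫ + 2*ρ*(1-1/c)*⟪Wp,W⟫)
            - (-(1/c)*⟪W,D⟫ - η*⟪W,Vv⟫ + 2*ρ*(1-1/c)*‖W‖^2) := by
        rw [hDx]
        simp only [inner_sub_left, inner_sub_right, inner_add_right,
          real_inner_smul_right, real_inner_self_eq_norm_sq]
        ring
      rw [e1, e2] at hco'
      exact hco'
    -- the Lipschitz inequality in scalar form
    have hlip' := hLip (x (k+1)) (y k)
    have hWpV : Wp - Vv = F (x (k+1)) - F (y k) := by
      simp only [hWp, hVv, hw]; abel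
    have hsq : η^2 * ‖Wp - Vv‖^2 ≤ ‖x (k+1) - y k‖^2 := by
      have h0 : η * ‖Wp - Vv‖ ≤ ‖x (k+1) - y k‖ := by
        rw [hWpV]
        nlinarith [norm_nonneg (x (k+1) - y k), norm_nonneg (F (x (k+1)) - F (y k)),
          mul_le_mul_of_nonneg_left hlip' hη.le]
      have h0' : (η * ‖Wp - Vv‖)^2 ≤ ‖x (k+1) - y k‖^2 := by
        have hnn : 0 ≤ η * ‖Wp - Vv‖ := by positivity
        nlinarith [h0, hnn]
      nlinarith [h0']
    have h2 : η^2*(‖Wp‖^2 - 2*⟪Wp,Vv⟫ + ‖Vv‖^2)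
        ≤ ((1-1/c)*η)^2*‖W‖^2 - 2*(((1-1/c)*η)*η)*⟪W,Vv⟫ + η^2*‖Vv‖^2 := by
      have e1 : ‖Wp - Vv‖^2 = ‖Wp‖^2 - 2*⟪Wp,Vv⟫ + ‖Vv‖^2 := norm_sub_sq_real Wp Vv
      have e2 : ‖x (k+1) - y k‖^2
          = ((1-1/c)*η)^2*‖W‖^2 - 2*(((1-1/c)*η)*η)*⟪W,Vv⟫ + η^2*‖Vv‖^2 := by
        rw [hXY, norm_sub_sq_real]
        simp only [real_inner_smul_left, real_inner_smul_right, norm_smul,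
          Real.norm_eq_abs, mul_pow, sq_abs]
        ring
      rw [e1, e2] at hsq
      exact hsq
    have main := feg_key η ρ c (‖W‖^2) (‖Wp‖^2) (‖Vv‖^2) ⟪Wp,W⟫ ⟪Wp,Vv⟫ ⟪Wp,D⟫ ⟪W,Vv⟫ ⟪W,D⟫
      hη hc h1 h2
    -- rewrite the potential at k+1 and k
    have hPk1 : V (k+1) = ((η-2*ρ)*c+2*ρ)*c/2*‖Wp‖^2
        + c*((1-1/c)*⟪Wp,D⟫ - η*⟪Wp,Vv⟫ + 2*ρ*(1-1/c)*⟪Wp,W⟫) := by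
      have ecast : ((k+1:ℕ):ℝ) + 1 = c := by rw [hcdef]; push_cast; ring
      have einner : ⟪Wp, x (k+1) - x 0⟫
          = (1-1/c)*⟪Wp,D⟫ - η*⟪Wp,Vv⟫ + 2*ρ*(1-1/c)*⟪Wp,W⟫ := by
        rw [hD']
        simp only [inner_sub_right, inner_add_right, real_inner_smul_right]
        try ring
      simp only [hV, ← hWp, ecast, einner]
    have hPk : V k = ((η-2*ρ)*(c-1)+2*ρ)*(c-1)/2*‖W‖^2 + (c-1)*⟪W,D⟫ := by
      have ecast : ((k:ℕ):ℝ) + 1 = c - 1 := by rw [hcdef]; push_cast; ring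
      simp only [hV, ← hW, ← hD, ecast]
    rw [hPk1, hPk]
    exact main
  have hVle : ∀ k, V k ≤ V 0 := by
    intro k
    induction k with
    | zero => exact le_refl _
    | succ n ih => exact (hstep n).trans ih
  intro k
  set K : ℝ := (k:ℝ) + 1 with hKdef
  have hK1 : (1:ℝ) ≤ K := by rw [hKdef]; have : (0:ℝ) ≤ (k:ℝ) := Nat.cast_nonneg k; linarith
  have hK0 : (0:ℝ) < K := by linarith
  set s := ‖w k‖ with hs
  set s0 := ‖w 0‖ with hs0
  set cst := ‖x 0 - xs‖ with hcst
  have hsnn : 0 ≤ s := norm_nonneg _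
  have hcnn : 0 ≤ cst := norm_nonneg _
  -- lower bound on the potential
  have hmono := hco (x k) (ξ k) xs ξs (hξ k) hξs
  rw [hzero, sub_zero] at hmono
  have hsplit : ⟪w k, x k - x 0⟫ = ⟪w k, x k - xs⟫ + ⟪w k, xs - x 0⟫ := by
    rw [← inner_add_right, sub_add_sub_cancel]
  have hCS : -(s * cst) ≤ ⟪w k, xs - x 0⟫ := by
    have h1 := abs_real_inner_le_norm (w k) (xs - x 0)
    rw [norm_sub_rev] at h1
    have h3 := neg_abs_le ⟪w k, xs - x 0⟫
    rw [hs, hcst]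
    linarith [h1, h3]
  have hVlb : (η-2*ρ)*K^2/2 * s^2 - K * s * cst ≤ V k := by
    have hb : (0:ℝ) ≤ K := hK0.le
    have m1 : K * (-ρ * s^2) ≤ K * ⟪w k, x k - xs⟫ :=
      mul_le_mul_of_nonneg_left (by simpa [hs] using hmono) hb
    have m2 : K * (-(s*cst)) ≤ K * ⟪w k, xs - x 0⟫ :=
      mul_le_mul_of_nonneg_left hCS hb
    have hVk : V k = ((η-2*ρ)*K+2*ρ)*K/2 * s^2 + K * ⟪w k, x k - x 0⟫ := by
      simp only [hV, hKdef, hs]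
    rw [hVk, hsplit]
    nlinarith [m1, m2]
  have hV0 : V 0 = η/2 * s0^2 := by
    have hz : x 0 - x 0 = 0 := sub_self _
    simp only [hV, hs0, hz, inner_zero_right, Nat.cast_zero]
    ring
  have hchain : (η-2*ρ)*K^2/2 * s^2 - K * s * cst ≤ η/2 * s0^2 := by
    calc (η-2*ρ)*K^2/2 * s^2 - K * s * cst ≤ V k := hVlb
      _ ≤ V 0 := hVle k
      _ = η/2 * s0^2 := hV0
  clear_value K s s0 cst
  have hden : (0:ℝ) < (η - 2*ρ)^2 * K^2 :=
    mul_pos (pow_pos (by linarith) 2) (pow_pos hK0 2)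
  have hgoal : s^2 ≤ (4 * cst^2 + 2*η*(η-2*ρ) * s0^2) / ((η-2*ρ)^2 * K^2) := by
    rw [le_div_iff₀ hden]
    nlinarith [sq_nonneg ((η-2*ρ)*K*s - 2*cst),
      mul_le_mul_of_nonneg_left hchain (by linarith : (0:ℝ) ≤ η - 2*ρ)]
  simpa [hs, hs0, hcst, hw, hKdef] using hgoal
end

section
/- Nesterov accelerated extragradient (AEG) potential identity: let t_k = k+2, θ_k = (t_k - 1)/t_{k+1}, ν_k = t_k/t_{k+1}, and suppose z^{k+1} = x^k - γ w^k and y^{k+1} = z^{k+1} + θ_k(z^{k+1} - z^k) + ν_k(y^k - z^{k+1}) for vectors w^k. Then with b_{k+1}θ_k = b_k, the combination T := ‖z^k + t_k(y^k - z^k) - x⋆‖² - ‖z^{k+1} + t_{k+1}(y^{k+1} - z^{k+1}) - x⋆‖² + b_k⟨w^{k-1}, z^k - y^k⟩ - b_{k+1}⟨w^k, z^{k+1} - y^{k+1}⟩ equals b_k⟨w^k - w^{k-1}, z^{k+1} - z^k⟩ + b_{k+1}⟨ν_k w^k - θ_k w^{k-1}, y^k - z^{k+1}⟩. -/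
open scoped RealInnerProductSpace

/-- Nesterov accelerated extragradient (AEG) potential identity. -/
theorem aeg_potential_identity {p : ℕ} (k : ℕ) (γ bk bk1 : ℝ)
    (xs xk wkm1 wk zk zk1 yk yk1 : EuclideanSpace ℝ (Fin p))
    (hz : zk1 = xk - γ • wk)
    (hy : yk1 = zk1 + (((k : ℝ) + 1) / ((k : ℝ) + 3)) • (zk1 - zk)
        + (((k : ℝ) + 2) / ((k : ℝ) + 3)) • (yk - zk1))
    (hb : bk1 * (((k : ℝ) + 1) / ((k : ℝ) + 3)) = bk) :
    ‖zk + ((k : ℝ) + 2) • (yk - zk) - xs‖ ^ 2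
        - ‖zk1 + ((k : ℝ) + 3) • (yk1 - zk1) - xs‖ ^ 2
        + bk * ⟪wkm1, zk - yk⟫ - bk1 * ⟪wk, zk1 - yk1⟫
      = bk * ⟪wk - wkm1, zk1 - zk⟫
        + bk1 * ⟪(((k : ℝ) + 2) / ((k : ℝ) + 3)) • wk
            - (((k : ℝ) + 1) / ((k : ℝ) + 3)) • wkm1, yk - zk1⟫ := by
  have h3 : (k : ℝ) + 3 ≠ 0 := by positivity
  have hvec : zk1 + ((k : ℝ) + 3) • (yk1 - zk1) = zk + ((k : ℝ) + 2) • (yk - zk) := by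
    subst hy
    match_scalars <;> field_simp <;> ring
  rw [hvec]
  subst hy
  simp only [inner_sub_left, inner_sub_right, inner_add_right, inner_smul_right,
    inner_smul_left, RCLike.conj_to_real]
  rw [← hb]
  field_simp
  ring
end
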